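/- Let L₁₂(x), L₁₃(x), L₂₃(x) be the 3×3 complex matrices L₁₂(x) = [[0,x,0],[x⁻¹,0,0],[0,0,1]], L₁₃(x) = [[0,0,x],[0,1,0],[x⁻¹,0,0]], L₂₃(x) = [[1,0,0],[0,0,x],[0,x⁻¹,0]] for x ∈ ℂ \ {0}. Then for each of the four maps T̂₁(x,y,z) = (x, x·z, y·x⁻¹), T̂₂(x,y,z) = (y·z⁻¹, x·z, z), T̂₃(x,y,z) = (y·z, x·z, z⁻¹), T̂₄(x,y,z) = (x⁻¹, x·z, x·y) on (ℂ \ {0})³, the relation (u,v,w) = T̂ᵢ(x,y,z) implies the matrix identity L₁₂(u)·L₁₃(v)·L₂₃(w) = L₂₃(z)·L₁₃(y)·L₁₂(x). -/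
import Mathlib


noncomputable section

section Tetra

variable {X : Type*}

/-- `T` acting on factors 1,2,3 of `X⁶`. -/
def lift123 (T : X × X × X → X × X × X) :
    X × X × X × X × X × X → X × X × X × X × X × X
  | (a, b, c, d, e, f) =>
    match T (a, b, c) with
    | (a', b', c') => (a', b', c', d, e, f)

/-- `T` acting on factors 1,4,5 of `X⁶`. -/
def lift145 (T : X × X × X → X × X × X) :
    X × X × X × X × X × X → X × X × X × X × X × X
  | (a, b, c, d, e, f) =>
    match T (a, d, e) with
    | (a', d', e') => (a', b, c, d', e', f)

/-- `T` acting on factors 2,4,6 of `X⁶`. -/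
def lift246 (T : X × X × X → X × X × X) :
    X × X × X × X × X × X → X × X × X × X × X × X
  | (a, b, c, d, e, f) =>
    match T (b, d, f) with
    | (b', d', f') => (a, b', c, d', e, f')

/-- `T` acting on factors 3,5,6 of `X⁶`. -/
def lift356 (T : X × X × X → X × X × X) :
    X × X × X × X × X × X → X × X × X × X × X × X
  | (a, b, c, d, e, f) =>
    match T (c, e, f) with
    | (c', e', f') => (a, b, c', d, e', f')

/-- The Zamolodchikov tetrahedron equation for a map `T : X³ → X³`. -/
def IsTetrahedronMap (T : X × X × X → X × X × X) : Prop :=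
  lift123 T ∘ lift145 T ∘ lift246 T ∘ lift356 T =
    lift356 T ∘ lift246 T ∘ lift145 T ∘ lift123 T

end Tetra

def Th1 : ℂˣ × ℂˣ × ℂˣ → ℂˣ × ℂˣ × ℂˣ := fun (x, y, z) => (x, x * z, y * x⁻¹)

def Th2 : ℂˣ × ℂˣ × ℂˣ → ℂˣ × ℂˣ × ℂˣ := fun (x, y, z) => (y * z⁻¹, x * z, z)

def Th3 : ℂˣ × ℂˣ × ℂˣ → ℂˣ × ℂˣ × ℂˣ := fun (x, y, z) => (y * z, x * z, z⁻¹)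

def Th4 : ℂˣ × ℂˣ × ℂˣ → ℂˣ × ℂˣ × ℂˣ := fun (x, y, z) => (x⁻¹, x * z, x * y)

def L12 (x : ℂˣ) : Matrix (Fin 3) (Fin 3) ℂ :=
  !![0, (x : ℂ), 0; (x : ℂ)⁻¹, 0, 0; 0, 0, 1]

def L13 (x : ℂˣ) : Matrix (Fin 3) (Fin 3) ℂ :=
  !![0, 0, (x : ℂ); 0, 1, 0; (x : ℂ)⁻¹, 0, 0]

def L23 (x : ℂˣ) : Matrix (Fin 3) (Fin 3) ℂ :=
  !![1, 0, 0; 0, 0, (x : ℂ); 0, (x : ℂ)⁻¹, 0]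


lemma lhs_eq (u v w : ℂˣ) :
    L12 u * L13 v * L23 w =
      !![0, 0, (u : ℂ) * w; 0, (u : ℂ)⁻¹ * v * (w : ℂ)⁻¹, 0; (v : ℂ)⁻¹, 0, 0] := by
  simp [L12, L13, L23, Matrix.mul_fin_three]

lemma rhs_eq (x y z : ℂˣ) :
    L23 z * L13 y * L12 x =
      !![0, 0, (y : ℂ); 0, (z : ℂ) * (y : ℂ)⁻¹ * x, 0; (z : ℂ)⁻¹ * (x : ℂ)⁻¹, 0, 0] := by
  simp [L12, L13, L23, Matrix.mul_fin_three]

theorem Lax_representation_Th1_Th2_Th3_Th4 :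
    ∀ x y z u v w : ℂˣ,
      ((u, v, w) = Th1 (x, y, z) →
        L12 u * L13 v * L23 w = L23 z * L13 y * L12 x) ∧
      ((u, v, w) = Th2 (x, y, z) →
        L12 u * L13 v * L23 w = L23 z * L13 y * L12 x) ∧
      ((u, v, w) = Th3 (x, y, z) →
        L12 u * L13 v * L23 w = L23 z * L13 y * L12 x) ∧
      ((u, v, w) = Th4 (x, y, z) →
        L12 u * L13 v * L23 w = L23 z * L13 y * L12 x) := by
  intro x y z u v w
  refine ⟨?_, ?_, ?_, ?_⟩ <;>
  · intro h
    simp only [Th1, Th2, Th3, Th4, Prod.mk.injEq] at h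
    obtain ⟨h1, h2, h3⟩ := h
    subst h1 h2 h3
    rw [lhs_eq, rhs_eq]
    ext i j
    fin_cases i <;> fin_cases j <;> push_cast <;> simp <;> field_simp <;> ring
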